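/- Let H be a bialgebra over a field k. H admits an antipode if and only if the map β' : H ⊗ H → H ⊗ H defined by β'(x ⊗ y) = (x ⊗ 1) · Δ(y) (i.e. β' = (μ ⊗ id) ∘ (id ⊗ Δ)) is bijective. -/

import Mathlib

set_option synthInstance.maxHeartbeats 1000000
set_option maxHeartbeats 1000000


open Coalgebra TensorProduct

/-- `S : H →ₗ[k] H` is an antipode for the bialgebra `H`: a two-sided convolution
inverse of the identity map. -/
def IsAntipode (k H : Type*) [CommRing k] [Ring H] [Bialgebra k H] (S : H →ₗ[k] H) : Prop :=
  LinearMap.mul' k H ∘ₗ S.rTensor H ∘ₗ (Coalgebra.comul : H →ₗ[k] H ⊗[k] H) =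
      Algebra.linearMap k H ∘ₗ Coalgebra.counit ∧
    LinearMap.mul' k H ∘ₗ S.lTensor H ∘ₗ (Coalgebra.comul : H →ₗ[k] H ⊗[k] H) =
      Algebra.linearMap k H ∘ₗ Coalgebra.counit

/-- The map `β' = (μ ⊗ id) ∘ (id ⊗ Δ) : H ⊗ H → H ⊗ H`, `x ⊗ y ↦ (x ⊗ 1) · Δ(y)`. -/
noncomputable def hopfMap' (k H : Type*) [CommRing k] [Ring H] [Bialgebra k H] :
    H ⊗[k] H →ₗ[k] H ⊗[k] H :=
  LinearMap.rTensor H (LinearMap.mul' k H) ∘ₗ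
    (TensorProduct.assoc k H H H).symm.toLinearMap ∘ₗ
      LinearMap.lTensor H (Coalgebra.comul : H →ₗ[k] H ⊗[k] H)

section helpers

open LinearMap

variable {k H : Type*} [CommRing k] [Ring H] [Bialgebra k H]

/-- The analogue of `hopfMap'` twisted by an endomorphism `T`:
`x ⊗ y ↦ ∑ x * T(y₁) ⊗ y₂`. -/
noncomputable def convMap (T : H →ₗ[k] H) : H ⊗[k] H →ₗ[k] H ⊗[k] H :=
  LinearMap.rTensor H (LinearMap.mul' k H) ∘ₗ
    (TensorProduct.assoc k H H H).symm.toLinearMap ∘ₗ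
      LinearMap.lTensor H (T.rTensor H ∘ₗ (Coalgebra.comul : H →ₗ[k] H ⊗[k] H))

lemma hopfMap'_tmul (x y : H) :
    hopfMap' k H (x ⊗ₜ[k] y) = (LinearMap.mulLeft k x).rTensor H (Coalgebra.comul y) := by
  rw [hopfMap']
  simp only [LinearMap.coe_comp, Function.comp_apply, LinearEquiv.coe_coe, lTensor_tmul]
  generalize (Coalgebra.comul (R := k) y) = t
  induction t using TensorProduct.induction_on with
  | zero => rw [tmul_zero]; simp only [map_zero]
  | tmul a b => simp only [_root_.TensorProduct.assoc_symm_tmul, rTensor_tmul, mul'_apply,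
      mulLeft_apply]
  | add u v hu hv => simp only [tmul_add, map_add, hu, hv]

lemma convMap_tmul (T : H →ₗ[k] H) (x y : H) :
    convMap T (x ⊗ₜ[k] y)
      = (LinearMap.mulLeft k x).rTensor H (T.rTensor H (Coalgebra.comul y)) := by
  rw [convMap]
  simp only [LinearMap.coe_comp, Function.comp_apply, LinearEquiv.coe_coe, lTensor_tmul]
  generalize (T.rTensor H (Coalgebra.comul (R := k) y)) = t
  induction t using TensorProduct.induction_on with
  | zero => rw [tmul_zero]; simp only [map_zero]
  | tmul a b => simp only [_root_.TensorProduct.assoc_symm_tmul, rTensor_tmul, mul'_apply,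
      mulLeft_apply]
  | add u v hu hv => simp only [tmul_add, map_add, hu, hv]

lemma sum_counit_smul {ι : Type*} {y : H} (r : Coalgebra.Repr k y ι) :
    ∑ i ∈ r.index, Coalgebra.counit (R := k) (r.left i) • r.right i = y := by
  have h := congrArg (TensorProduct.lid k H) (Coalgebra.sum_counit_tmul_eq r)
  simpa only [map_sum, _root_.TensorProduct.lid_tmul, one_smul] using h

lemma repr_mul_antipode {S : H →ₗ[k] H}
    (h2 : LinearMap.mul' k H ∘ₗ S.lTensor H ∘ₗ (Coalgebra.comul : H →ₗ[k] H ⊗[k] H) =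
      Algebra.linearMap k H ∘ₗ Coalgebra.counit) {ι : Type*} (a : H) (ra : Coalgebra.Repr k a ι) :
    ∑ j ∈ ra.index, ra.left j * S (ra.right j)
      = algebraMap k H (Coalgebra.counit (R := k) a) := by
  have h := LinearMap.congr_fun h2 a
  simp only [LinearMap.coe_comp, Function.comp_apply, Algebra.linearMap_apply] at h
  rw [← ra.eq, map_sum, map_sum] at h
  simpa only [lTensor_tmul, mul'_apply] using h

lemma repr_antipode_mul {S : H →ₗ[k] H}
    (h1 : LinearMap.mul' k H ∘ₗ S.rTensor H ∘ₗ (Coalgebra.comul : H →ₗ[k] H ⊗[k] H) =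
      Algebra.linearMap k H ∘ₗ Coalgebra.counit) {ι : Type*} (a : H) (ra : Coalgebra.Repr k a ι) :
    ∑ j ∈ ra.index, S (ra.left j) * ra.right j
      = algebraMap k H (Coalgebra.counit (R := k) a) := by
  have h := LinearMap.congr_fun h1 a
  simp only [LinearMap.coe_comp, Function.comp_apply, Algebra.linearMap_apply] at h
  rw [← ra.eq, map_sum, map_sum] at h
  simpa only [rTensor_tmul, mul'_apply] using h

lemma mul_algebraMap_eq_smul (c : k) (z : H) : z * algebraMap k H c = c • z := by
  rw [Algebra.smul_def, Algebra.commutes]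

lemma forward_bijective {S : H →ₗ[k] H} (hS : IsAntipode k H S) :
    Function.Bijective (hopfMap' k H) := by
  obtain ⟨h1, h2⟩ := hS
  refine Function.bijective_iff_has_inverse.mpr ⟨convMap S, ?_, ?_⟩
  · -- γ ∘ β = id
    intro t
    induction t using TensorProduct.induction_on with
    | zero => simp only [map_zero]
    | add u v hu hv => simp only [map_add, hu, hv]
    | tmul x y =>
      set r := ℛ k y with hr
      set s : (i : r.ι) → Coalgebra.Repr k (r.right i) (H × H) := fun i => ℛ k (r.right i) with hsdef
      -- compute γ (β (x ⊗ y))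
      rw [hopfMap'_tmul, ← r.eq]
      simp only [map_sum, rTensor_tmul, mulLeft_apply, convMap_tmul]
      have hexp : ∀ i ∈ r.index,
          (LinearMap.mulLeft k (x * r.left i)).rTensor H
              (S.rTensor H (Coalgebra.comul (r.right i)))
            = ∑ j ∈ (s i).index,
                ((x * r.left i) * S ((s i).left j)) ⊗ₜ[k] (s i).right j := by
        intro i _
        rw [← (s i).eq, map_sum, map_sum]
        simp only [rTensor_tmul, mulLeft_apply]
      rw [Finset.sum_congr rfl hexp]
      -- use coassociativity
      have key := Coalgebra.sum_tmul_tmul_eq r (fun i => ℛ k (r.left i)) s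
      have key2 := congrArg
        ((LinearMap.mul' k H ∘ₗ TensorProduct.map (LinearMap.mulLeft k x) S).rTensor H ∘ₗ
          (TensorProduct.assoc k H H H).symm.toLinearMap) key
      simp only [map_sum, LinearMap.coe_comp, Function.comp_apply, LinearEquiv.coe_coe,
        _root_.TensorProduct.assoc_symm_tmul, rTensor_tmul, _root_.TensorProduct.map_tmul, mul'_apply,
        mulLeft_apply] at key2
      rw [← key2]
      -- collapse using the antipode identity on the left legs
      have hstep : ∀ i ∈ r.index,
          ∑ j ∈ (ℛ k (r.left i)).index,
              (x * (ℛ k (r.left i)).left j * S ((ℛ k (r.left i)).right j)) ⊗ₜ[k] r.right i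
            = Coalgebra.counit (R := k) (r.left i) • (x ⊗ₜ[k] r.right i) := by
        intro i _
        rw [← TensorProduct.sum_tmul]
        simp only [mul_assoc]
        rw [← Finset.mul_sum, repr_mul_antipode h2 (r.left i) (ℛ k (r.left i)),
          mul_algebraMap_eq_smul, smul_tmul']
      rw [Finset.sum_congr rfl hstep]
      simp only [← tmul_smul, ← tmul_sum]
      rw [_root_.sum_counit_smul]
  · -- β ∘ γ = id
    intro t
    induction t using TensorProduct.induction_on with
    | zero => simp only [map_zero]
    | add u v hu hv => simp only [map_add, hu, hv]
    | tmul x y =>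
      set r := ℛ k y with hr
      set s : (i : r.ι) → Coalgebra.Repr k (r.right i) (H × H) := fun i => ℛ k (r.right i) with hsdef
      rw [convMap_tmul, ← r.eq]
      simp only [map_sum, rTensor_tmul, mulLeft_apply, hopfMap'_tmul]
      have hexp : ∀ i ∈ r.index,
          (LinearMap.mulLeft k (x * S (r.left i))).rTensor H (Coalgebra.comul (r.right i))
            = ∑ j ∈ (s i).index,
                ((x * S (r.left i)) * (s i).left j) ⊗ₜ[k] (s i).right j := by
        intro i _
        rw [← (s i).eq, map_sum]
        simp only [rTensor_tmul, mulLeft_apply]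
      rw [Finset.sum_congr rfl hexp]
      have key := Coalgebra.sum_tmul_tmul_eq r (fun i => ℛ k (r.left i)) s
      have key2 := congrArg
        ((LinearMap.mul' k H ∘ₗ
            TensorProduct.map (LinearMap.mulLeft k x ∘ₗ S) LinearMap.id).rTensor H ∘ₗ
          (TensorProduct.assoc k H H H).symm.toLinearMap) key
      simp only [map_sum, LinearMap.coe_comp, Function.comp_apply, LinearEquiv.coe_coe,
        _root_.TensorProduct.assoc_symm_tmul, rTensor_tmul, _root_.TensorProduct.map_tmul, mul'_apply,
        mulLeft_apply, LinearMap.id_coe, id_eq] at key2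
      rw [← key2]
      have hstep : ∀ i ∈ r.index,
          ∑ j ∈ (ℛ k (r.left i)).index,
              (x * S ((ℛ k (r.left i)).left j) * (ℛ k (r.left i)).right j) ⊗ₜ[k] r.right i
            = Coalgebra.counit (R := k) (r.left i) • (x ⊗ₜ[k] r.right i) := by
        intro i _
        rw [← TensorProduct.sum_tmul]
        simp only [mul_assoc]
        rw [← Finset.mul_sum, repr_antipode_mul h1 (r.left i) (ℛ k (r.left i)),
          mul_algebraMap_eq_smul, smul_tmul']
      rw [Finset.sum_congr rfl hstep]
      simp only [← tmul_smul, ← tmul_sum]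
      rw [_root_.sum_counit_smul]

lemma hopfMap'_one_tmul (y : H) :
    hopfMap' k H ((1 : H) ⊗ₜ[k] y) = Coalgebra.comul (R := k) y := by
  rw [hopfMap'_tmul, mulLeft_one, rTensor_id, LinearMap.id_apply]

lemma hopfMap'_rTensor_mulLeft (a : H) (t : H ⊗[k] H) :
    hopfMap' k H ((LinearMap.mulLeft k a).rTensor H t)
      = (LinearMap.mulLeft k a).rTensor H (hopfMap' k H t) := by
  induction t using TensorProduct.induction_on with
  | zero => simp only [map_zero]
  | add u v hu hv => simp only [map_add, hu, hv]
  | tmul x y =>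
    rw [rTensor_tmul, mulLeft_apply, hopfMap'_tmul, hopfMap'_tmul, mulLeft_mul,
      rTensor_comp_apply]

lemma hopfMap'_comodule (t : H ⊗[k] H) :
    (Coalgebra.comul (R := k) (A := H)).lTensor H (hopfMap' k H t)
      = TensorProduct.assoc k H H H ((hopfMap' k H).rTensor H
          ((TensorProduct.assoc k H H H).symm
            ((Coalgebra.comul (R := k) (A := H)).lTensor H t))) := by
  induction t using TensorProduct.induction_on with
  | zero => simp only [map_zero]
  | add u v hu hv => simp only [map_add, hu, hv]
  | tmul x y =>
    rw [lTensor_tmul, hopfMap'_tmul]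
    have A1 : ∀ u : H ⊗[k] H,
        (hopfMap' k H).rTensor H ((TensorProduct.assoc k H H H).symm (x ⊗ₜ[k] u))
          = (((LinearMap.mulLeft k x).rTensor H) ∘ₗ
              (Coalgebra.comul (R := k) (A := H))).rTensor H u := by
      intro u
      induction u using TensorProduct.induction_on with
      | zero => rw [tmul_zero]; simp only [map_zero]
      | add u v hu hv => rw [tmul_add]; simp only [map_add, hu, hv]
      | tmul b c =>
        rw [_root_.TensorProduct.assoc_symm_tmul]
        simp only [rTensor_tmul, hopfMap'_tmul, LinearMap.coe_comp, Function.comp_apply]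
    rw [A1, rTensor_comp_apply, ← Coalgebra.coassoc_symm_apply]
    have A2 : ∀ v : H ⊗[k] (H ⊗[k] H),
        TensorProduct.assoc k H H H
            (((LinearMap.mulLeft k x).rTensor H).rTensor H
              ((TensorProduct.assoc k H H H).symm v))
          = (LinearMap.mulLeft k x).rTensor (H ⊗[k] H) v := by
      intro v
      induction v using TensorProduct.induction_on with
      | zero => simp only [map_zero]
      | add u v hu hv => simp only [map_add, hu, hv]
      | tmul a w =>
        induction w using TensorProduct.induction_on with
        | zero => rw [tmul_zero]; simp only [map_zero]
        | add u v hu hv => rw [tmul_add]; simp only [map_add, hu, hv]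
        | tmul b c =>
          simp only [_root_.TensorProduct.assoc_symm_tmul, rTensor_tmul, mulLeft_apply,
            _root_.TensorProduct.assoc_tmul]
    rw [A2]
    generalize Coalgebra.comul (R := k) y = u
    induction u using TensorProduct.induction_on with
    | zero => simp only [map_zero]
    | add u v hu hv => simp only [map_add, hu, hv]
    | tmul a b => simp only [rTensor_tmul, mulLeft_apply, lTensor_tmul]

end helpers

/-- A bialgebra over a field admits an antipode iff the map
`β'(x ⊗ y) = (x ⊗ 1) · Δ(y)` is bijective. -/
theorem exists_antipode_iff_hopfMap'_bijective (k H : Type*) [Field k] [Ring H]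
    [Bialgebra k H] :
    (∃ S : H →ₗ[k] H, IsAntipode k H S) ↔ Function.Bijective (hopfMap' k H) := by
  constructor
  · rintro ⟨S, hS⟩
    exact forward_bijective hS
  · intro hb
    classical
    let e : (H ⊗[k] H) ≃ₗ[k] H ⊗[k] H := LinearEquiv.ofBijective (hopfMap' k H) hb
    have he : ∀ t, e t = hopfMap' k H t := fun t => rfl
    have hse : ∀ t, e.symm (hopfMap' k H t) = t := by
      intro t; rw [← he t]; exact e.symm_apply_apply t
    have hes : ∀ t, hopfMap' k H (e.symm t) = t := by
      intro t; rw [← he]; exact e.apply_symm_apply t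
    let hm : H ⊗[k] H →ₗ[k] H :=
      (TensorProduct.rid k H).toLinearMap ∘ₗ (Coalgebra.counit (R := k) (A := H)).lTensor H
    let fm : H ⊗[k] H →ₗ[k] H :=
      (TensorProduct.lid k H).toLinearMap ∘ₗ (Coalgebra.counit (R := k) (A := H)).rTensor H
    have hm_tmul : ∀ a b : H, hm (a ⊗ₜ[k] b) = Coalgebra.counit (R := k) b • a := by
      intro a b
      simp only [hm, LinearMap.coe_comp, Function.comp_apply, LinearMap.lTensor_tmul,
        LinearEquiv.coe_coe, _root_.TensorProduct.rid_tmul]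
    have fm_tmul : ∀ a b : H, fm (a ⊗ₜ[k] b) = Coalgebra.counit (R := k) a • b := by
      intro a b
      simp only [fm, LinearMap.coe_comp, Function.comp_apply, LinearMap.rTensor_tmul,
        LinearEquiv.coe_coe, _root_.TensorProduct.lid_tmul]
    have hm_comul : ∀ y : H, hm (Coalgebra.comul (R := k) y) = y := by
      intro y
      simp only [hm, LinearMap.coe_comp, Function.comp_apply, Coalgebra.lTensor_counit_comul,
        LinearEquiv.coe_coe, _root_.TensorProduct.rid_tmul, one_smul]
    have fm_comul : ∀ y : H, fm (Coalgebra.comul (R := k) y) = y := by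
      intro y
      simp only [fm, LinearMap.coe_comp, Function.comp_apply, Coalgebra.rTensor_counit_comul,
        LinearEquiv.coe_coe, _root_.TensorProduct.lid_tmul, one_smul]
    have hm_rT : ∀ (g : H →ₗ[k] H) (t : H ⊗[k] H), hm (g.rTensor H t) = g (hm t) := by
      intro g t
      induction t using TensorProduct.induction_on with
      | zero => simp only [map_zero]
      | add u v hu hv => simp only [map_add, hu, hv]
      | tmul a b => rw [LinearMap.rTensor_tmul, hm_tmul, hm_tmul, map_smul]
    have mul'_eq : ∀ t : H ⊗[k] H, LinearMap.mul' k H t = hm (hopfMap' k H t) := by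
      intro t
      induction t using TensorProduct.induction_on with
      | zero => simp only [map_zero]
      | add u v hu hv => simp only [map_add, hu, hv]
      | tmul x y =>
        rw [LinearMap.mul'_apply, hopfMap'_tmul, hm_rT, hm_comul, LinearMap.mulLeft_apply]
    let S : H →ₗ[k] H := hm ∘ₗ e.symm.toLinearMap ∘ₗ TensorProduct.mk k H H 1
    have P2γ : ∀ (a : H) (t : H ⊗[k] H),
        e.symm ((LinearMap.mulLeft k a).rTensor H t)
          = (LinearMap.mulLeft k a).rTensor H (e.symm t) := by
      intro a t
      apply hb.injective
      rw [hes, hopfMap'_rTensor_mulLeft, hes]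
    have Cγ : ∀ t : H ⊗[k] H,
        (Coalgebra.comul (R := k) (A := H)).lTensor H (e.symm t)
          = TensorProduct.assoc k H H H
              ((e.symm.toLinearMap).rTensor H
                ((TensorProduct.assoc k H H H).symm
                  ((Coalgebra.comul (R := k) (A := H)).lTensor H t))) := by
      intro t
      have h0 := hopfMap'_comodule (k := k) (H := H) (e.symm t)
      rw [hes] at h0
      rw [h0, LinearEquiv.symm_apply_apply, ← LinearMap.rTensor_comp_apply]
      have hid : e.symm.toLinearMap ∘ₗ hopfMap' k H = LinearMap.id := LinearMap.ext hse
      rw [hid, LinearMap.rTensor_id, LinearMap.id_apply, LinearEquiv.apply_symm_apply]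
    have assoc_symm_one : ∀ t : H ⊗[k] H,
        (TensorProduct.assoc k H H H).symm ((1 : H) ⊗ₜ[k] t)
          = (TensorProduct.mk k H H 1).rTensor H t := by
      intro t
      induction t using TensorProduct.induction_on with
      | zero => rw [tmul_zero]; simp only [map_zero]
      | add u v hu hv => rw [tmul_add]; simp only [map_add, hu, hv]
      | tmul b c =>
        simp only [_root_.TensorProduct.assoc_symm_tmul, LinearMap.rTensor_tmul, mk_apply]
    have lT_fm_comul : ∀ u : H ⊗[k] H,
        fm.lTensor H ((Coalgebra.comul (R := k) (A := H)).lTensor H u) = u := by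
      intro u
      rw [← LinearMap.lTensor_comp_apply]
      have hid : fm ∘ₗ (Coalgebra.comul (R := k) (A := H)) = LinearMap.id :=
        LinearMap.ext fm_comul
      rw [hid, LinearMap.lTensor_id, LinearMap.id_apply]
    have lT_fm_assoc : ∀ w : (H ⊗[k] H) ⊗[k] H,
        fm.lTensor H (TensorProduct.assoc k H H H w) = hm.rTensor H w := by
      intro w
      induction w using TensorProduct.induction_on with
      | zero => simp only [map_zero]
      | add u v hu hv => simp only [map_add, hu, hv]
      | tmul p c =>
        induction p using TensorProduct.induction_on with
        | zero => rw [zero_tmul]; simp only [map_zero]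
        | add u v hu hv => rw [add_tmul]; simp only [map_add, hu, hv]
        | tmul a b =>
          rw [_root_.TensorProduct.assoc_tmul, LinearMap.lTensor_tmul, LinearMap.rTensor_tmul,
            fm_tmul, hm_tmul, ← smul_tmul]
    have K : ∀ y : H, e.symm ((1 : H) ⊗ₜ[k] y)
        = S.rTensor H (Coalgebra.comul (R := k) y) := by
      intro y
      have h0 := Cγ ((1 : H) ⊗ₜ[k] y)
      rw [LinearMap.lTensor_tmul, assoc_symm_one, ← LinearMap.rTensor_comp_apply] at h0
      have h1 := congrArg (fm.lTensor H) h0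
      rw [lT_fm_comul, lT_fm_assoc, ← LinearMap.rTensor_comp_apply] at h1
      exact h1
    have ax1 : ∀ y : H, LinearMap.mul' k H (S.rTensor H (Coalgebra.comul (R := k) y))
        = algebraMap k H (Coalgebra.counit (R := k) y) := by
      intro y
      rw [← K, mul'_eq, hes, hm_tmul, Algebra.algebraMap_eq_smul_one]
    have comul_inv : ∀ y : H, e.symm (Coalgebra.comul (R := k) y) = (1 : H) ⊗ₜ[k] y := by
      intro y
      rw [← hopfMap'_one_tmul (k := k) y, hse]
    have ax2 : ∀ y : H, LinearMap.mul' k H (S.lTensor H (Coalgebra.comul (R := k) y))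
        = algebraMap k H (Coalgebra.counit (R := k) y) := by
      intro y
      set r := ℛ k y with hr
      have h0 := comul_inv y
      rw [← r.eq, map_sum] at h0
      have hterm : ∀ i ∈ r.index, e.symm (r.left i ⊗ₜ[k] r.right i)
          = (LinearMap.mulLeft k (r.left i)).rTensor H
              (S.rTensor H (Coalgebra.comul (r.right i))) := by
        intro i _
        rw [show r.left i ⊗ₜ[k] r.right i
            = (LinearMap.mulLeft k (r.left i)).rTensor H ((1 : H) ⊗ₜ[k] r.right i) by
          rw [LinearMap.rTensor_tmul, LinearMap.mulLeft_apply, mul_one]]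
        rw [P2γ, K]
      rw [Finset.sum_congr rfl hterm] at h0
      have h1 := congrArg hm h0
      rw [map_sum, hm_tmul] at h1
      simp only [hm_rT, hm_comul, LinearMap.mulLeft_apply] at h1
      rw [← r.eq, map_sum, map_sum]
      simp only [LinearMap.lTensor_tmul, LinearMap.mul'_apply]
      rw [h1, Algebra.algebraMap_eq_smul_one]
    refine ⟨S, ?_, ?_⟩
    · apply LinearMap.ext
      intro y
      simp only [LinearMap.coe_comp, Function.comp_apply, Algebra.linearMap_apply]
      exact ax1 y
    · apply LinearMap.ext
      intro y
      simp only [LinearMap.coe_comp, Function.comp_apply, Algebra.linearMap_apply]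
      exact ax2 y
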